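/- For all integers m ≥ j ≥ 0, ∑_{k=0}^{j} h_k(α_1, α_2, …, α_{m−k+1}) · e_{j−k}(−α_1, −α_2, …, −α_{m−k}) equals 1 if j = 0 and equals 0 if j > 0. -/

import Mathlib

variable {R : Type*} [CommRing R]

/-- Elementary symmetric polynomial `e_m` of the entries of a list (zero for `m < 0`). -/
def esymL (l : List R) (m : ℤ) : R :=
  if 0 ≤ m then
    ∑ s ∈ Finset.powersetCard m.toNat (Finset.univ : Finset (Fin l.length)), ∏ i ∈ s, l.get i
  else 0

/-- Complete homogeneous symmetric polynomial `h_m` of the entries of a list (zero for `m < 0`). -/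
def hsymL (l : List R) (m : ℤ) : R :=
  if 0 ≤ m then
    ∑ s ∈ (Finset.univ : Finset (Fin l.length)).sym m.toNat, ((s.1).map l.get).prod
  else 0

/-- The list `f a, f (a+1), …, f b` (empty if `b < a`). -/
def intList (f : ℤ → R) (a b : ℤ) : List R :=
  (List.range (b + 1 - a).toNat).map (fun p => f (a + (p : ℤ)))

/-- `e_m(f a, …, f b)`. -/
def eI (f : ℤ → R) (a b m : ℤ) : R := esymL (intList f a b) m

/-- `h_m(f a, …, f b)`. -/
def hI (f : ℤ → R) (a b m : ℤ) : R := hsymL (intList f a b) m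

/-! ### Auxiliary lemmas -/

lemma esymL_neg (l : List R) {m : ℤ} (h : m < 0) : esymL l m = 0 := if_neg (not_le.2 h)

lemma hsymL_neg (l : List R) {m : ℤ} (h : m < 0) : hsymL l m = 0 := if_neg (not_le.2 h)

lemma esymL_zero (l : List R) : esymL l 0 = 1 := by simp [esymL]

lemma hsymL_zero (l : List R) : hsymL l 0 = 1 := by
  simp only [hsymL, if_pos le_rfl, Int.toNat_zero, Finset.sym_zero, Finset.sum_singleton]
  rfl

lemma hsymL_nil (m : ℤ) : hsymL ([] : List R) m = if m = 0 then 1 else 0 := by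
  rcases lt_trichotomy m 0 with h | h | h
  · rw [hsymL_neg _ h, if_neg h.ne]
  · simp [h, hsymL_zero]
  · rw [if_neg h.ne', hsymL, if_pos h.le]
    obtain ⟨n, hn⟩ : ∃ n : ℕ, m.toNat = n + 1 := ⟨m.toNat - 1, by omega⟩
    rw [hn]
    simp

lemma esymL_of_length_lt (l : List R) {m : ℤ} (h : (l.length : ℤ) < m) : esymL l m = 0 := by
  have h0 : 0 ≤ m := le_trans (Int.ofNat_nonneg _) h.le
  rw [esymL, if_pos h0, Finset.powersetCard_eq_empty.2 (by simp; omega), Finset.sum_empty]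

lemma esymL_coe (l : List R) (n : ℕ) : esymL l (n : ℤ) = Multiset.esymm (↑l) n := by
  rw [esymL, if_pos (Int.ofNat_nonneg n), Int.toNat_natCast,
    ← Finset.esymm_map_val l.get Finset.univ n]
  congr 1
  simp [Fin.univ_val_map, List.ofFn_get]

lemma esymm_cons_aux (x : R) (s : Multiset R) (n : ℕ) :
    (x ::ₘ s).esymm (n + 1) = s.esymm (n + 1) + x * s.esymm n := by
  rw [Multiset.esymm, Multiset.powersetCard_cons, Multiset.map_add, Multiset.sum_add,
    Multiset.map_map, Multiset.esymm, Multiset.esymm]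
  congr 1
  rw [← Multiset.sum_map_mul_left]
  congr 1
  apply Multiset.map_congr rfl
  intro t _
  simp [Multiset.prod_cons]

lemma esymL_concat (l : List R) (x : R) (m : ℤ) :
    esymL (l ++ [x]) m = esymL l m + x * esymL l (m - 1) := by
  rcases lt_trichotomy m 0 with h | h | h
  · rw [esymL_neg _ h, esymL_neg _ h, esymL_neg _ (by omega), mul_zero, add_zero]
  · subst h
    rw [esymL_zero, esymL_zero, esymL_neg _ (by norm_num), mul_zero, add_zero]
  · obtain ⟨n, rfl⟩ : ∃ n : ℕ, m = ((n : ℤ) + 1) := ⟨(m - 1).toNat, by omega⟩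
    have h1 : ((n : ℤ) + 1) = ((n + 1 : ℕ) : ℤ) := by push_cast; ring
    have h2 : ((n + 1 : ℕ) : ℤ) - 1 = ((n : ℕ) : ℤ) := by push_cast; ring
    have hl : (↑(l ++ [x]) : Multiset R) = x ::ₘ ↑l :=
      Quot.sound (List.perm_append_singleton x l)
    rw [h1, h2, esymL_coe, esymL_coe, esymL_coe, hl, esymm_cons_aux]

/-! ### Complete homogeneous: recurrence via `Sym` -/

/-- Sum over all `n`-multisets of a fintype. -/
def Hs (α : Type*) [Fintype α] [DecidableEq α] (f : α → R) (n : ℕ) : R :=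
  ∑ s : Sym α n, ((s.1).map f).prod

lemma hsymL_coe (l : List R) (n : ℕ) : hsymL l (n : ℤ) = Hs (Fin l.length) l.get n := by
  rw [hsymL, if_pos (Int.ofNat_nonneg n), Int.toNat_natCast, Finset.sym_univ, Hs]

lemma Hs_congr {α β : Type*} [Fintype α] [DecidableEq α] [Fintype β] [DecidableEq β]
    (e : α ≃ β) (f : α → R) (g : β → R) (h : ∀ i, g (e i) = f i) (n : ℕ) :
    Hs α f n = Hs β g n := by
  apply Fintype.sum_equiv (Sym.equivCongr e)
  intro s
  have : ((Sym.equivCongr e) s).1 = s.1.map e := rfl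
  rw [this, Multiset.map_map]
  congr 1
  apply Multiset.map_congr rfl
  intro t _
  exact (h t).symm

lemma Hs_option {α : Type*} [Fintype α] [DecidableEq α] (f : Option α → R) (n : ℕ) :
    Hs (Option α) f (n + 1) = f none * Hs (Option α) f n + Hs α (f ∘ some) (n + 1) := by
  rw [Hs, ← Equiv.sum_comp (symOptionSuccEquiv (α := α) (n := n)).symm, Fintype.sum_sum_type]
  congr 1
  · rw [Hs, Finset.mul_sum]
    apply Finset.sum_congr rfl
    intro s _
    have : ((symOptionSuccEquiv.symm (Sum.inl s) : Sym (Option α) (n + 1))).1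
        = none ::ₘ s.1 := rfl
    rw [this, Multiset.map_cons, Multiset.prod_cons]
  · rw [Hs]
    apply Finset.sum_congr rfl
    intro s _
    have : ((symOptionSuccEquiv.symm (Sum.inr s) : Sym (Option α) (n + 1))).1
        = s.1.map some := rfl
    rw [this, Multiset.map_map]

lemma hsymL_concat (l : List R) (x : R) (m : ℤ) :
    hsymL (l ++ [x]) m = hsymL l m + x * hsymL (l ++ [x]) (m - 1) := by
  rcases lt_trichotomy m 0 with h | h | h
  · rw [hsymL_neg _ h, hsymL_neg _ h, hsymL_neg _ (by omega), mul_zero, add_zero]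
  · subst h
    rw [hsymL_zero, hsymL_zero, hsymL_neg _ (by norm_num), mul_zero, add_zero]
  · obtain ⟨n, rfl⟩ : ∃ n : ℕ, m = ((n : ℤ) + 1) := ⟨(m - 1).toNat, by omega⟩
    have hlen : (l ++ [x]).length = l.length + 1 := by simp
    set g : Option (Fin l.length) → R := fun o => o.elim x l.get with hg
    have hcongr : ∀ k : ℕ, Hs (Fin (l ++ [x]).length) (l ++ [x]).get k
        = Hs (Option (Fin l.length)) g k := by
      intro k
      apply Hs_congr ((finCongr hlen).trans finSuccEquivLast)
      have H : ∀ j : Fin (l.length + 1),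
          g (finSuccEquivLast j) = (l ++ [x]).get ⟨j.1, by omega⟩ := by
        intro j
        induction j using Fin.lastCases with
        | last =>
          simp only [finSuccEquivLast_last]
          show x = (l ++ [x]).get ⟨l.length, by omega⟩
          simp [List.get_eq_getElem]
        | cast j =>
          simp only [finSuccEquivLast_castSucc]
          show l.get j = (l ++ [x]).get ⟨j.1, by omega⟩
          simp [List.get_eq_getElem, List.getElem_append_left j.2]
      intro i
      exact H (finCongr hlen i)
    have h1 : ((n : ℤ) + 1) = ((n + 1 : ℕ) : ℤ) := by push_cast; ring
    have h2 : ((n + 1 : ℕ) : ℤ) - 1 = ((n : ℕ) : ℤ) := by push_cast; ring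
    rw [h1, h2, hsymL_coe, hsymL_coe, hsymL_coe, hcongr, hcongr, Hs_option]
    have hnone : g none = x := rfl
    have hsome : g ∘ some = l.get := by funext i; rfl
    rw [hnone, hsome, add_comm]

/-! ### `intList` lemmas -/

lemma intList_eq (f : ℤ → R) (a b : ℤ) :
    intList f a b = (List.range (b + 1 - a).toNat).map (fun p : ℕ => f (a + (p : ℤ))) := by
  rw [intList]
  show List.map _ ((List.range _).flatMap (fun a : ℕ => [(a : ℤ)])) = _
  rw [show ((List.range (b + 1 - a).toNat).flatMap fun a : ℕ => [(a : ℤ)])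
      = (List.range (b + 1 - a).toNat).map (fun a : ℕ => (a : ℤ)) from
    List.map_eq_flatMap.symm, List.map_map]
  rfl

lemma intList_length (f : ℤ → R) (a b : ℤ) : (intList f a b).length = (b + 1 - a).toNat := by
  rw [intList_eq, List.length_map, List.length_range]

lemma intList_nil (f : ℤ → R) {a b : ℤ} (h : b < a) : intList f a b = [] := by
  have h0 : (b + 1 - a).toNat = 0 := by omega
  rw [intList_eq, h0]
  rfl

lemma intList_concat (f : ℤ → R) {a b : ℤ} (h : a ≤ b) :
    intList f a b = intList f a (b - 1) ++ [f b] := by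
  have h1 : (b + 1 - a).toNat = (b - a).toNat + 1 := by omega
  have h2 : (b - 1 + 1 - a) = b - a := by ring
  rw [intList_eq, h1, List.range_succ, List.map_append, intList_eq, h2]
  congr 1
  simp only [List.map_cons, List.map_nil]
  congr 2
  rw [Int.toNat_of_nonneg (show (0:ℤ) ≤ b - a by omega)]
  ring

/-! ### The key recurrence step -/

lemma step_sum (α : ℤ → R) (j m : ℤ) (hj : 0 ≤ j) (hm : j ≤ m) :
    (∑ k ∈ Finset.Icc 0 j,
        hI α 1 (m - k + 1) k * eI (fun t => -α t) 1 (m - k) (j - k))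
      = ∑ k ∈ Finset.Icc 0 j,
        hI α 1 (m - k) k * eI (fun t => -α t) 1 (m - k - 1) (j - k) := by
  set β : ℤ → R := fun t => -α t with hβ
  have expandH : ∀ k ∈ Finset.Icc 0 j,
      hI α 1 (m - k + 1) k
        = hI α 1 (m - k) k + α (m - k + 1) * hI α 1 (m - k + 1) (k - 1) := by
    intro k hk
    rw [Finset.mem_Icc] at hk
    have hcat : intList α 1 (m - k + 1) = intList α 1 (m - k) ++ [α (m - k + 1)] := by
      have := intList_concat α (a := 1) (b := m - k + 1) (by omega)
      simpa using this
    rw [hI, hI, hI, hcat, hsymL_concat]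
  have expandE : ∀ k ∈ Finset.Icc 0 j,
      eI β 1 (m - k) (j - k)
        = eI β 1 (m - k - 1) (j - k) + β (m - k) * eI β 1 (m - k - 1) (j - k - 1) := by
    intro k hk
    rw [Finset.mem_Icc] at hk
    rcases eq_or_lt_of_le hk.2 with heq | hlt
    · subst heq
      simp only [sub_self]
      rw [eI, eI, eI, esymL_zero, esymL_zero, esymL_neg _ (by norm_num), mul_zero, add_zero]
    · have hcat : intList β 1 (m - k) = intList β 1 (m - k - 1) ++ [β (m - k)] := by
        exact intList_concat β (a := 1) (b := m - k) (by omega)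
      rw [eI, eI, eI, hcat, esymL_concat]
  have main : (∑ k ∈ Finset.Icc 0 j,
      hI α 1 (m - k + 1) k * eI β 1 (m - k) (j - k))
    = (∑ k ∈ Finset.Icc 0 j, hI α 1 (m - k) k * eI β 1 (m - k - 1) (j - k))
      + ((∑ k ∈ Finset.Icc 0 j,
            hI α 1 (m - k) k * (β (m - k) * eI β 1 (m - k - 1) (j - k - 1)))
         + ∑ k ∈ Finset.Icc 0 j,
            α (m - k + 1) * hI α 1 (m - k + 1) (k - 1) * eI β 1 (m - k) (j - k)) := by
    rw [← Finset.sum_add_distrib, ← Finset.sum_add_distrib]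
    apply Finset.sum_congr rfl
    intro k hk
    rw [expandH k hk]
    rw [expandE k hk]
    ring
  rw [main]
  -- it remains to show that the extra two sums cancel
  have hzero : (∑ k ∈ Finset.Icc 0 j,
        hI α 1 (m - k) k * (β (m - k) * eI β 1 (m - k - 1) (j - k - 1)))
      + (∑ k ∈ Finset.Icc 0 j,
        α (m - k + 1) * hI α 1 (m - k + 1) (k - 1) * eI β 1 (m - k) (j - k)) = 0 := by
    -- rewrite the second sum by reindexing
    have hins0 : Finset.Icc (0 : ℤ) j = insert 0 (Finset.Icc 1 j) := by
      ext k
      simp only [Finset.mem_Icc, Finset.mem_insert]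
      omega
    have hinsj : Finset.Icc (0 : ℤ) j = insert j (Finset.Icc 0 (j - 1)) := by
      ext k
      simp only [Finset.mem_Icc, Finset.mem_insert]
      omega
    have hmap : Finset.Icc (1 : ℤ) j
        = (Finset.Icc (0 : ℤ) (j - 1)).map (addRightEmbedding 1) := by
      rw [Finset.map_add_right_Icc]
      norm_num
    have hB : (∑ k ∈ Finset.Icc (0 : ℤ) j,
          α (m - k + 1) * hI α 1 (m - k + 1) (k - 1) * eI β 1 (m - k) (j - k))
        = ∑ k ∈ Finset.Icc (0 : ℤ) (j - 1),
          α (m - k) * hI α 1 (m - k) k * eI β 1 (m - k - 1) (j - k - 1) := by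
      rw [hins0, Finset.sum_insert (by simp), hmap, Finset.sum_map]
      have h0 : α (m - 0 + 1) * hI α 1 (m - 0 + 1) (0 - 1) * eI β 1 (m - 0) (j - 0) = 0 := by
        rw [hI, hsymL_neg _ (by norm_num), mul_zero, zero_mul]
      rw [h0, zero_add]
      apply Finset.sum_congr rfl
      intro k hk
      have e1 : m - (addRightEmbedding 1 k) + 1 = m - k := by
        simp [addRightEmbedding]; ring
      have e2 : (addRightEmbedding 1 k) - 1 = k := by
        simp [addRightEmbedding]
      have e3 : m - (addRightEmbedding 1 k) = m - k - 1 := by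
        simp [addRightEmbedding]; ring
      have e4 : j - (addRightEmbedding 1 k) = j - k - 1 := by
        simp [addRightEmbedding]; ring
      rw [e1, e2, e3, e4]
    have hC : (∑ k ∈ Finset.Icc (0 : ℤ) j,
          hI α 1 (m - k) k * (β (m - k) * eI β 1 (m - k - 1) (j - k - 1)))
        = -∑ k ∈ Finset.Icc (0 : ℤ) (j - 1),
          α (m - k) * hI α 1 (m - k) k * eI β 1 (m - k - 1) (j - k - 1) := by
      rw [hinsj, Finset.sum_insert (by simp), ← Finset.sum_neg_distrib]
      have h0 : hI α 1 (m - j) j * (β (m - j) * eI β 1 (m - j - 1) (j - j - 1)) = 0 := by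
        rw [eI, esymL_neg _ (by norm_num), mul_zero, mul_zero]
      rw [h0, zero_add]
      apply Finset.sum_congr rfl
      intro k hk
      rw [hβ]
      ring
    rw [hB, hC]
    ring
  rw [hzero, add_zero]

/-- Corollary 2.7, first identity: for m ≥ j ≥ 0,
∑_{k=0}^{j} h_k(α_1,…,α_{m−k+1}) e_{j−k}(−α_1,…,−α_{m−k}) = δ_{j0}. -/
theorem product_cob_identity_first (α : ℤ → R) (m j : ℤ) (hj : 0 ≤ j) (hm : j ≤ m) :
    (∑ k ∈ Finset.Icc 0 j,
      hI α 1 (m - k + 1) k * eI (fun t => -α t) 1 (m - k) (j - k))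
      = if j = 0 then 1 else 0 := by
  -- reduce to m = j - 1 + n and induct on n
  have key : ∀ n : ℕ,
      (∑ k ∈ Finset.Icc 0 j,
        hI α 1 ((j - 1 + n) - k + 1) k * eI (fun t => -α t) 1 ((j - 1 + n) - k) (j - k))
        = if j = 0 then 1 else 0 := by
    intro n
    induction n with
    | zero =>
      push_cast
      rw [Finset.sum_eq_single_of_mem j (Finset.mem_Icc.2 ⟨hj, le_rfl⟩)]
      · have e1 : j - 1 + 0 - j + 1 = 0 := by ring
        have e2 : intList α 1 (j - 1 + 0 - j + 1) = [] := by
          rw [e1]; exact intList_nil α (by norm_num)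
        rw [hI, e2, hsymL_nil, sub_self, eI, esymL_zero, mul_one]
      · intro k hk hkj
        rw [Finset.mem_Icc] at hk
        have hlen : ((intList (fun t => -α t) 1 (j - 1 + 0 - k)).length : ℤ) < j - k := by
          rw [intList_length]
          omega
        rw [eI, esymL_of_length_lt _ hlen, mul_zero]
    | succ n ih =>
      have hcast : (j - 1 + ((n : ℤ) + 1)) = j + n := by ring
      have hstep := step_sum α j (j + n) hj (by omega)
      push_cast
      calc (∑ k ∈ Finset.Icc 0 j,
            hI α 1 (j - 1 + ((n : ℤ) + 1) - k + 1) k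
              * eI (fun t => -α t) 1 (j - 1 + ((n : ℤ) + 1) - k) (j - k))
          = ∑ k ∈ Finset.Icc 0 j,
            hI α 1 ((j + n) - k + 1) k * eI (fun t => -α t) 1 ((j + n) - k) (j - k) := by
            apply Finset.sum_congr rfl
            intro k _
            have e1 : j - 1 + ((n : ℤ) + 1) - k + 1 = (j + n) - k + 1 := by ring
            have e2 : j - 1 + ((n : ℤ) + 1) - k = (j + n) - k := by ring
            rw [e1, e2]
        _ = ∑ k ∈ Finset.Icc 0 j,
            hI α 1 ((j + n) - k) k * eI (fun t => -α t) 1 ((j + n) - k - 1) (j - k) := hstep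
        _ = if j = 0 then 1 else 0 := by
            rw [← ih]
            apply Finset.sum_congr rfl
            intro k _
            have e2 : (j + n) - k - 1 = j - 1 + (n : ℤ) - k := by ring
            have e1 : (j + n) - k = j - 1 + (n : ℤ) - k + 1 := by ring
            rw [e2, e1]
  have hmn : m = j - 1 + ((m - j + 1).toNat : ℤ) := by
    rw [Int.toNat_of_nonneg (by omega)]
    ring
  rw [hmn]
  exact key _
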